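/- Let r ≥ 3 be an integer. There exists n_0 such that for all n ≥ n_0, ex_r(n, C_4) = e_r(F_n). -/

import Mathlib

open Finset

/-- Build a simple graph from an arbitrary relation by symmetrizing it and
removing loops. -/
def mkGraph {V : Type*} (r : V → V → Prop) : SimpleGraph V where
  Adj v w := v ≠ w ∧ (r v w ∨ r w v)
  symm := ⟨fun _ _ h => ⟨h.1.symm, h.2.symm⟩⟩
  loopless := ⟨fun _ h => h.1 rfl⟩

/-- `G` contains a copy of `F` as a (not necessarily induced) subgraph. -/
def Contains {α β : Type*} (F : SimpleGraph α) (G : SimpleGraph β) : Prop :=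
  ∃ f : α ↪ β, ∀ a b, F.Adj a b → G.Adj (f a) (f b)

/-- `e_r(G)`, the sum of the `r`-th powers of the degrees of `G`. -/
noncomputable def degPow {β : Type*} [Fintype β] (G : SimpleGraph β) (r : ℕ) : ℕ :=
  ∑ v, ((G.neighborSet v).ncard) ^ r

/-- `N(S_p, G) = ∑_v C(d(v), p)`, the number of copies of the star `S_p` in `G`. -/
noncomputable def starCount {β : Type*} [Fintype β] (G : SimpleGraph β) (p : ℕ) : ℕ :=
  ∑ v, ((G.neighborSet v).ncard).choose p

/-- The number of edges of `G`. -/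
noncomputable def edgeCount {β : Type*} (G : SimpleGraph β) : ℕ :=
  G.edgeSet.ncard

/-- `ex_r(n, F)`: the largest value of `e_r(G)` over `F`-free graphs `G` on `n` vertices. -/
noncomputable def exDegPow {α : Type*} (n r : ℕ) (F : SimpleGraph α) : ℕ :=
  sSup {m | ∃ G : SimpleGraph (Fin n), ¬ Contains F G ∧ degPow G r = m}

/-- `ex(n, S_p, F)`: the largest number of copies of the star `S_p` in an `F`-free
graph on `n` vertices. -/
noncomputable def exStarCount {α : Type*} (n p : ℕ) (F : SimpleGraph α) : ℕ :=
  sSup {m | ∃ G : SimpleGraph (Fin n), ¬ Contains F G ∧ starCount G p = m}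


/-- The friendship graph `F_n` on `n` vertices: vertex `0` is adjacent to all other
vertices, and the remaining `n − 1` vertices carry the maximum matching
`{1,2}, {3,4}, …` with `⌊(n−1)/2⌋` edges. -/
def friendshipGraph (n : ℕ) : SimpleGraph (Fin n) :=
  mkGraph (fun v w => v.val = 0 ∨ (v.val % 2 = 1 ∧ w.val = v.val + 1))

open SimpleGraph

section Aux

lemma contains_c4_iff {β : Type*} (G : SimpleGraph β) :
    Contains (cycleGraph 4) G ↔
      ∃ x y z w : β, x ≠ y ∧ z ≠ w ∧ G.Adj x z ∧ G.Adj x w ∧ G.Adj y z ∧ G.Adj y w := by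
  constructor
  · rintro ⟨f, hf⟩
    exact ⟨f 0, f 2, f 1, f 3, f.injective.ne (by decide), f.injective.ne (by decide),
      hf 0 1 (by decide), hf 0 3 (by decide), hf 2 1 (by decide), hf 2 3 (by decide)⟩
  · rintro ⟨x, y, z, w, hxy, hzw, hxz, hxw, hyz, hyw⟩
    refine ⟨⟨![x, z, y, w], ?_⟩, ?_⟩
    · intro a b hab
      fin_cases a <;> fin_cases b <;>
        simp_all [hxy, hzw, hxz.ne, hxw.ne, hyz.ne, hyw.ne, hxz.ne', hxw.ne', hyz.ne', hyw.ne',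
          hxy.symm, hzw.symm]
    · intro a b hab
      fin_cases a <;> fin_cases b <;>
        first
          | exact hxz | exact hxw | exact hyz | exact hyw
          | exact hxz.symm | exact hxw.symm | exact hyz.symm | exact hyw.symm
          | exact absurd hab (by decide)

section
variable {n : ℕ} {G : SimpleGraph (Fin n)} [DecidableRel G.Adj]

lemma cn_le_one (hG : ¬ Contains (cycleGraph 4) G) {x y : Fin n} (hxy : x ≠ y) :
    (G.neighborFinset x ∩ G.neighborFinset y).card ≤ 1 := by
  by_contra h
  push_neg at h
  obtain ⟨z, hz, w, hw, hzw⟩ := Finset.one_lt_card.mp h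
  simp only [mem_inter, mem_neighborFinset] at hz hw
  exact hG ((contains_c4_iff G).mpr ⟨x, y, z, w, hxy, hzw, hz.1, hw.1, hz.2, hw.2⟩)

lemma two_choose_two (d : ℕ) : 2 * d.choose 2 = d * (d - 1) := by
  match d with
  | 0 => rfl
  | (k+1) =>
    rw [Nat.choose_two_right]
    simp only [Nat.add_sub_cancel]
    have h : 2 ∣ (k + 1) * k := by
      rcases Nat.even_or_odd k with h | h
      · exact Dvd.dvd.mul_left h.two_dvd _
      · exact Dvd.dvd.mul_right (h.add_one).two_dvd _
    rw [Nat.mul_div_cancel' h]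

lemma sum_choose_two_le (hG : ¬ Contains (cycleGraph 4) G) :
    ∑ v : Fin n, (G.degree v).choose 2 ≤ n.choose 2 := by
  have key : ∀ v : Fin n, (G.degree v).choose 2 =
      (((univ : Finset (Fin n)).powersetCard 2).filter (fun s => s ⊆ G.neighborFinset v)).card := by
    intro v
    rw [← SimpleGraph.card_neighborFinset_eq_degree, ← Finset.card_powersetCard]
    congr 1
    ext s
    simp only [Finset.mem_powersetCard, Finset.mem_filter]
    constructor
    · exact fun h => ⟨⟨subset_univ s, h.2⟩, h.1⟩
    · exact fun h => ⟨h.2, h.1.2⟩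
  calc ∑ v : Fin n, (G.degree v).choose 2
      = ∑ v : Fin n, ∑ s ∈ (univ : Finset (Fin n)).powersetCard 2,
          (if s ⊆ G.neighborFinset v then 1 else 0) := by
        simp only [key, Finset.card_filter]
    _ = ∑ s ∈ (univ : Finset (Fin n)).powersetCard 2, ∑ v : Fin n,
          (if s ⊆ G.neighborFinset v then 1 else 0) := Finset.sum_comm
    _ ≤ ∑ _s ∈ (univ : Finset (Fin n)).powersetCard 2, 1 := by
        refine Finset.sum_le_sum fun s hs => ?_
        rw [Finset.mem_powersetCard] at hs
        obtain ⟨x, y, hxy, rfl⟩ := Finset.card_eq_two.mp hs.2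
        calc ∑ v : Fin n, (if ({x, y} : Finset (Fin n)) ⊆ G.neighborFinset v then 1 else 0)
            = ((univ : Finset (Fin n)).filter (fun v => ({x, y} : Finset (Fin n)) ⊆ G.neighborFinset v)).card := by
              rw [Finset.card_filter]
          _ ≤ (G.neighborFinset x ∩ G.neighborFinset y).card := by
              refine Finset.card_le_card fun v hv => ?_
              rw [Finset.mem_filter, Finset.insert_subset_iff, Finset.singleton_subset_iff] at hv
              rw [Finset.mem_inter, mem_neighborFinset, mem_neighborFinset]
              rw [mem_neighborFinset, mem_neighborFinset] at hv
              exact ⟨hv.2.1.symm, hv.2.2.symm⟩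
          _ ≤ 1 := cn_le_one hG hxy
    _ = n.choose 2 := by
        rw [Finset.sum_const, smul_eq_mul, mul_one, Finset.card_powersetCard, Finset.card_univ,
          Fintype.card_fin]

lemma sum_dd_le (hG : ¬ Contains (cycleGraph 4) G) :
    ∑ v : Fin n, G.degree v * (G.degree v - 1) ≤ n * (n - 1) := by
  have h := sum_choose_two_le hG
  calc ∑ v : Fin n, G.degree v * (G.degree v - 1)
      = ∑ v : Fin n, 2 * (G.degree v).choose 2 := by simp [two_choose_two]
    _ = 2 * ∑ v : Fin n, (G.degree v).choose 2 := by rw [Finset.mul_sum]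
    _ ≤ 2 * n.choose 2 := by omega
    _ = n * (n - 1) := two_choose_two n

lemma sum_deg_nbhd (hG : ¬ Contains (cycleGraph 4) G) (u : Fin n) :
    ∑ w ∈ G.neighborFinset u, G.degree w ≤ G.degree u + (n - 1) := by
  have hrw : ∀ x : Fin n, ((G.neighborFinset u).filter (fun w => G.Adj w x))
      = G.neighborFinset u ∩ G.neighborFinset x := by
    intro x
    ext w
    simp only [Finset.mem_filter, Finset.mem_inter, mem_neighborFinset]
    exact ⟨fun h => ⟨h.1, h.2.symm⟩, fun h => ⟨h.1, h.2.symm⟩⟩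
  calc ∑ w ∈ G.neighborFinset u, G.degree w
      = ∑ w ∈ G.neighborFinset u, ∑ x : Fin n, (if G.Adj w x then 1 else 0) := by
        refine Finset.sum_congr rfl fun w _ => ?_
        rw [← SimpleGraph.card_neighborFinset_eq_degree, neighborFinset_eq_filter,
          Finset.card_filter]
    _ = ∑ x : Fin n, ∑ w ∈ G.neighborFinset u, (if G.Adj w x then 1 else 0) := Finset.sum_comm
    _ = ∑ x : Fin n, (G.neighborFinset u ∩ G.neighborFinset x).card := by
        refine Finset.sum_congr rfl fun x _ => ?_
        rw [← hrw, Finset.card_filter]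
    _ ≤ G.degree u + (n - 1) := by
        rw [← Finset.sum_erase_add _ _ (Finset.mem_univ u)]
        have h1 : (G.neighborFinset u ∩ G.neighborFinset u).card = G.degree u := by
          rw [Finset.inter_self]; exact G.card_neighborFinset_eq_degree u
        rw [h1, add_comm]
        refine add_le_add le_rfl ?_
        calc ∑ x ∈ univ.erase u, (G.neighborFinset u ∩ G.neighborFinset x).card
            ≤ ∑ _x ∈ univ.erase u, 1 := by
              refine Finset.sum_le_sum fun x hx => ?_
              exact cn_le_one hG (Finset.ne_of_mem_erase hx).symm |>.trans_eq' (by rw [Finset.inter_comm]) |>.trans_eq' rfl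
          _ = n - 1 := by
              rw [Finset.sum_const, smul_eq_mul, mul_one, Finset.card_erase_of_mem (Finset.mem_univ u), Finset.card_univ, Fintype.card_fin]

end

lemma even_card_of_inv {α : Type*} [DecidableEq α] (f : α → α) (s : Finset α)
    (h1 : ∀ a ∈ s, f a ∈ s) (h2 : ∀ a ∈ s, f a ≠ a) (h3 : ∀ a ∈ s, f (f a) = a) :
    Even s.card := by
  induction s using Finset.strongInduction with
  | _ s ih =>
    rcases s.eq_empty_or_nonempty with rfl | ⟨a, ha⟩
    · simp
    · have hfa : f a ∈ s := h1 a ha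
      have hne : f a ≠ a := h2 a ha
      have hmem : ∀ b ∈ (s.erase a).erase (f a), b ∈ s := fun b hb =>
        Finset.mem_of_mem_erase (Finset.mem_of_mem_erase hb)
      have hss : (s.erase a).erase (f a) ⊂ s :=
        Finset.ssubset_of_subset_of_ssubset
          ((Finset.erase_subset _ _)) (Finset.erase_ssubset ha)
      have hcard : s.card = ((s.erase a).erase (f a)).card + 2 := by
        rw [Finset.card_erase_of_mem (Finset.mem_erase.mpr ⟨hne, hfa⟩),
          Finset.card_erase_of_mem ha]
        have : 2 ≤ s.card := Finset.one_lt_card.mpr ⟨a, ha, f a, hfa, fun h => hne h.symm⟩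
        omega
      have he : Even ((s.erase a).erase (f a)).card := by
        refine ih _ hss ?_ ?_ ?_
        · intro b hb
          have hbs := hmem b hb
          rw [Finset.mem_erase] at hb
          have hba : b ≠ a := (Finset.mem_erase.mp hb.2).1
          have hbfa : b ≠ f a := hb.1
          refine Finset.mem_erase.mpr ⟨?_, Finset.mem_erase.mpr ⟨?_, h1 b hbs⟩⟩
          · intro h
            have hc := congrArg f h
            rw [h3 b hbs, h3 a ha] at hc
            exact hba hc
          · intro h
            have hc := congrArg f h
            rw [h3 b hbs] at hc
            exact hbfa hc
        · intro b hb; exact h2 b (hmem b hb)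
        · intro b hb; exact h3 b (hmem b hb)
      rw [hcard]
      exact he.add (by decide)

lemma caseA_arith (k n D : ℕ) (hn : 5 ≤ n) (hD : 2 * D ≤ n - 1) :
    D ^ (k + 1) * (n * (n - 1) + n * D) < (n - 1) ^ (k + 3) := by
  set m := n - 1 with hm
  have hm4 : 4 ≤ m := by omega
  have key : 2 ^ (k + 2) * (D ^ (k + 1) * (n * m + n * D)) ≤ 3 * n * m ^ (k + 2) := by
    have h1 : 2 ^ (k + 2) * (D ^ (k + 1) * (n * m + n * D)) =
        (2 * D) ^ (k + 1) * (2 * (n * m + n * D)) := by ring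
    rw [h1]
    have h2 : (2 * D) ^ (k + 1) ≤ m ^ (k + 1) := Nat.pow_le_pow_left hD _
    have h3 : 2 * (n * m + n * D) ≤ 3 * (n * m) := by
      have : n * (2 * D) ≤ n * m := Nat.mul_le_mul_left n hD
      nlinarith
    calc (2 * D) ^ (k + 1) * (2 * (n * m + n * D)) ≤ m ^ (k + 1) * (3 * (n * m)) :=
          Nat.mul_le_mul h2 h3
      _ = 3 * n * m ^ (k + 2) := by ring
  have key2 : 3 * n * m ^ (k + 2) < 2 ^ (k + 2) * (n - 1) ^ (k + 3) := by
    have h4 : 3 * n < 2 ^ (k + 2) * m := by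
      have h40 : (4 : ℕ) ≤ 2 ^ (k + 2) := by
        calc (4 : ℕ) = 2 ^ 2 := rfl
          _ ≤ 2 ^ (k + 2) := Nat.pow_le_pow_right (by norm_num) (by omega)
      have h41 : 4 * m ≤ 2 ^ (k + 2) * m := Nat.mul_le_mul_right m h40
      have h42 : 3 * n < 4 * m := by omega
      exact h42.trans_le h41
    calc 3 * n * m ^ (k + 2) < (2 ^ (k + 2) * m) * m ^ (k + 2) :=
          (Nat.mul_lt_mul_right (Nat.pow_pos (by omega))).mpr h4
      _ = 2 ^ (k + 2) * (n - 1) ^ (k + 3) := by rw [← hm]; ring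
  have := key.trans_lt key2
  exact Nat.lt_of_mul_lt_mul_left this

lemma caseB_key (b t m : ℕ) (hbt : b + t = m) (hb : t + 1 ≤ b) (ht : 1 ≤ t)
    (hm : 79 ≤ m) : 2 * m * ((t + 2) * (t + 2)) < t * (m * m + m * b + b * b) := by
  have key0 : 5 * t * t + 8 * t + 8 ≤ 3 * m * t := by
    rcases le_or_gt 7 t with h7 | h7
    · have h1 : 2 * t + 1 ≤ m := by omega
      have h2 : 7 * t ≤ t * t := Nat.mul_le_mul_right t h7
      have h3 : (2 * t + 1) * (3 * t) ≤ m * (3 * t) := Nat.mul_le_mul_right _ h1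
      nlinarith
    · have h2 : 5 * t * t ≤ 5 * t * 6 := Nat.mul_le_mul_left (5 * t) (by omega)
      have h3 : 3 * 79 * 1 ≤ 3 * m * t := Nat.mul_le_mul (Nat.mul_le_mul_left 3 hm) ht
      omega
  nlinarith [Nat.mul_le_mul_right b key0, Nat.mul_le_mul_right t key0,
    Nat.one_le_iff_ne_zero.mpr (show t * t * t ≠ 0 by positivity)]

lemma caseB_arith (k b t m : ℕ) (hbt : b + t = m) (hb : t + 1 ≤ b) (ht : 1 ≤ t)
    (hm : 79 ≤ m) :
    b ^ (k + 3) + (t + 2) ^ (k + 1) * (2 * m * (t + 2)) < m ^ (k + 3) := by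
  have htm : t + 2 ≤ m := by omega
  have hkey := caseB_key b t m hbt hb ht hm
  have h1 : (t + 2) ^ (k + 1) * (2 * m * (t + 2)) =
      (2 * m * ((t + 2) * (t + 2))) * (t + 2) ^ k := by ring
  have h2 : (t + 2) ^ k ≤ m ^ k := Nat.pow_le_pow_left htm k
  have h3 : (t + 2) ^ (k + 1) * (2 * m * (t + 2)) < t * (m * m + m * b + b * b) * m ^ k := by
    rw [h1]
    calc (2 * m * ((t + 2) * (t + 2))) * (t + 2) ^ k
        ≤ (2 * m * ((t + 2) * (t + 2))) * m ^ k := Nat.mul_le_mul_left _ h2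
      _ < t * (m * m + m * b + b * b) * m ^ k := by
          refine (Nat.mul_lt_mul_right ?_).mpr hkey
          exact Nat.pow_pos (by omega)
  have h4 : b ^ (k + 3) ≤ b * b * b * m ^ k := by
    have : b ^ k ≤ m ^ k := Nat.pow_le_pow_left (by omega) k
    calc b ^ (k + 3) = b * b * b * b ^ k := by ring
      _ ≤ b * b * b * m ^ k := Nat.mul_le_mul_left _ this
  have h5 : b * b * b + t * (m * m + m * b + b * b) = m * m * m := by
    subst hbt; ring
  calc b ^ (k + 3) + (t + 2) ^ (k + 1) * (2 * m * (t + 2))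
      < b * b * b * m ^ k + t * (m * m + m * b + b * b) * m ^ k :=
        Nat.add_lt_add_of_le_of_lt h4 h3
    _ = (b * b * b + t * (m * m + m * b + b * b)) * m ^ k := by ring
    _ = m * m * m * m ^ k := by rw [h5]
    _ = m ^ (k + 3) := by ring

lemma dominant_arith (P ma ka Ka : ℕ) (hP : 1 ≤ P) (hk : ka ≤ Ka) (hK : Ka ≤ ma) :
    P * ka + (ma - ka) ≤ P * Ka + (ma - Ka) := by
  have h1 : (Ka - ka) * P = Ka * P - ka * P := Nat.sub_mul _ _ _
  have h2 : Ka - ka ≤ (Ka - ka) * P := Nat.le_mul_of_pos_right _ (by omega)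
  have h3 : ka * P ≤ Ka * P := Nat.mul_le_mul_right _ hk
  have h4 : P * ka = ka * P := Nat.mul_comm _ _
  have h5 : P * Ka = Ka * P := Nat.mul_comm _ _
  omega

lemma friend_adj {n : ℕ} (v w : Fin n) :
    (friendshipGraph n).Adj v w ↔ v.val ≠ w.val ∧
      (v.val = 0 ∨ (v.val % 2 = 1 ∧ w.val = v.val + 1) ∨ w.val = 0 ∨
        (w.val % 2 = 1 ∧ v.val = w.val + 1)) := by
  show (v ≠ w ∧ _) ↔ _
  rw [Ne, Fin.ext_iff]
  tauto

instance {n : ℕ} : DecidableRel (friendshipGraph n).Adj := fun v w =>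
  decidable_of_iff' _ (friend_adj v w)

lemma friend_c4_free (n : ℕ) : ¬ Contains (cycleGraph 4) (friendshipGraph n) := by
  rw [contains_c4_iff]
  rintro ⟨x, y, z, w, hxy, hzw, h1, h2, h3, h4⟩
  rw [friend_adj] at h1 h2 h3 h4
  rw [Ne, Fin.ext_iff] at hxy hzw
  omega

lemma friend_nbhd_zero {n : ℕ} (v : Fin n) (hv : v.val = 0) :
    (friendshipGraph n).neighborFinset v = univ.erase v := by
  ext w
  rw [mem_neighborFinset, friend_adj, Finset.mem_erase]
  simp only [mem_univ, and_true, Ne, Fin.ext_iff]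
  omega

lemma friend_degree {n : ℕ} (hn : 3 ≤ n) (v : Fin n) :
    (friendshipGraph n).degree v =
      if v.val = 0 then n - 1
      else if v.val = n - 1 ∧ (n - 1) % 2 = 1 then 1 else 2 := by
  rcases Nat.eq_zero_or_pos v.val with hv | hv
  · rw [if_pos hv, ← card_neighborFinset_eq_degree, friend_nbhd_zero v hv,
      Finset.card_erase_of_mem (mem_univ v), Finset.card_univ, Fintype.card_fin]
  · rw [if_neg (by omega)]
    have h0 : (0 : ℕ) < n := by omega
    by_cases hlast : v.val = n - 1 ∧ (n - 1) % 2 = 1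
    · rw [if_pos hlast, ← card_neighborFinset_eq_degree]
      have : (friendshipGraph n).neighborFinset v = {⟨0, h0⟩} := by
        ext w
        rw [mem_neighborFinset, friend_adj, Finset.mem_singleton, Fin.ext_iff]
        have hw := w.isLt
        have hv' := v.isLt
        simp only [Fin.val_mk]
        omega
      rw [this, Finset.card_singleton]
    · rw [if_neg hlast, ← card_neighborFinset_eq_degree]
      rcases Nat.even_or_odd v.val with hpar | hpar
      · -- v even, nonzero: neighbors 0 and v-1
        have hv2 : 2 ≤ v.val := by
          rcases hpar with ⟨c, hc⟩; omega
        have hvlt : v.val - 1 < n := by omega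
        have : (friendshipGraph n).neighborFinset v = {⟨0, h0⟩, ⟨v.val - 1, hvlt⟩} := by
          ext w
          rw [mem_neighborFinset, friend_adj, Finset.mem_insert, Finset.mem_singleton,
            Fin.ext_iff, Fin.ext_iff]
          have hw := w.isLt
          have hv' := v.isLt
          have hpar' : v.val % 2 = 0 := Nat.even_iff.mp hpar
          simp only [Fin.val_mk]
          omega
        rw [this, Finset.card_pair (by rw [Ne, Fin.ext_iff]; simp only [Fin.val_mk]; omega)]
      · -- v odd, not last (or last but n-1 even, impossible since v odd)
        have hpar' : v.val % 2 = 1 := Nat.odd_iff.mp hpar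
        have hvlt : v.val + 1 < n := by
          have hv' := v.isLt
          rcases Nat.lt_or_ge (v.val + 1) n with h | h
          · exact h
          · exfalso; exact hlast ⟨by omega, by omega⟩
        have : (friendshipGraph n).neighborFinset v = {⟨0, h0⟩, ⟨v.val + 1, hvlt⟩} := by
          ext w
          rw [mem_neighborFinset, friend_adj, Finset.mem_insert, Finset.mem_singleton,
            Fin.ext_iff, Fin.ext_iff]
          have hw := w.isLt
          simp only [Fin.val_mk]
          omega
        rw [this, Finset.card_pair (by rw [Ne, Fin.ext_iff]; simp only [Fin.val_mk]; omega)]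


lemma ncard_neighborSet_eq_degree {V : Type*} [Fintype V] (G : SimpleGraph V)
    [DecidableRel G.Adj] (v : V) : (G.neighborSet v).ncard = G.degree v := by
  rw [← card_neighborFinset_eq_degree, neighborFinset_def, Set.ncard_eq_toFinset_card']

lemma degPow_eq_sum {V : Type*} [Fintype V] (G : SimpleGraph V) [DecidableRel G.Adj] (r : ℕ) :
    degPow G r = ∑ v, G.degree v ^ r := by
  unfold degPow
  exact Finset.sum_congr rfl fun v _ => by rw [ncard_neighborSet_eq_degree]

lemma friend_degPow {n : ℕ} (hn : 3 ≤ n) (r : ℕ) :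
    degPow (friendshipGraph n) r =
      (n - 1) ^ r + 2 ^ r * (2 * ((n - 1) / 2)) + ((n - 1) - 2 * ((n - 1) / 2)) := by
  set m := n - 1 with hm
  have hm2 : 2 ≤ m := by omega
  rw [degPow_eq_sum]
  have hstep : ∀ v : Fin n, (friendshipGraph n).degree v ^ r =
      (fun i : ℕ => (if i = 0 then m else if i = m ∧ m % 2 = 1 then 1 else 2) ^ r) v.val := by
    intro v
    rw [friend_degree (by omega) v]
  rw [Finset.sum_congr rfl fun v _ => hstep v,
    Fin.sum_univ_eq_sum_range (fun i : ℕ => (if i = 0 then m else if i = m ∧ m % 2 = 1 then 1 else 2) ^ r) n,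
    show n = m + 1 by omega, Finset.sum_range_succ]
  have h0mem : 0 ∈ Finset.range m := Finset.mem_range.mpr (by omega)
  have hsplit : ∑ i ∈ Finset.range m,
      (if i = 0 then m else if i = m ∧ m % 2 = 1 then 1 else 2) ^ r
      = m ^ r + (m - 1) * 2 ^ r := by
    rw [← Finset.add_sum_erase _ _ h0mem, if_pos rfl]
    congr 1
    rw [Finset.sum_congr rfl (fun i hi => ?_), Finset.sum_const,
      Finset.card_erase_of_mem h0mem, Finset.card_range, smul_eq_mul]
    have hi0 : i ≠ 0 := (Finset.mem_erase.mp hi).1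
    have him : i < m := Finset.mem_range.mp (Finset.mem_erase.mp hi).2
    rw [if_neg hi0, if_neg (by omega)]
  rw [hsplit]
  have hmm : ¬ (m = 0) := by omega
  rw [if_neg hmm]
  rcases Nat.even_or_odd m with hpar | hpar
  · have hp : ¬ (m = m ∧ m % 2 = 1) := by
      rw [Nat.even_iff] at hpar; omega
    rw [if_neg hp]
    have hK : 2 * (m / 2) = m := by rw [Nat.even_iff] at hpar; omega
    rw [hK, Nat.sub_self, add_zero]
    obtain ⟨c, hc⟩ : ∃ c, m = c + 1 := ⟨m - 1, by omega⟩
    rw [hc]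
    simp only [Nat.add_sub_cancel]
    ring
  · have hp : (m = m ∧ m % 2 = 1) := ⟨rfl, Nat.odd_iff.mp hpar⟩
    rw [if_pos hp]
    have hK : 2 * (m / 2) = m - 1 := by rw [Nat.odd_iff] at hpar; omega
    rw [hK, one_pow]
    have h1 : m - (m - 1) = 1 := by omega
    rw [h1]
    ring

section
variable {n : ℕ} {G : SimpleGraph (Fin n)} [DecidableRel G.Adj]

lemma degree_le_pred (v : Fin n) : G.degree v ≤ n - 1 := by
  rw [← card_neighborFinset_eq_degree]
  calc (G.neighborFinset v).card ≤ (univ.erase v).card :=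
        Finset.card_le_card (fun w hw => Finset.mem_erase.mpr
          ⟨(G.adj_symm ((mem_neighborFinset _ _ _).mp hw)).ne, mem_univ w⟩)
    _ = n - 1 := by
        rw [Finset.card_erase_of_mem (mem_univ v), Finset.card_univ, Fintype.card_fin]

lemma sq_split (d : ℕ) : d ^ 2 = d * (d - 1) + d := by
  cases d with
  | zero => rfl
  | succ c => simp only [Nat.add_sub_cancel]; ring

lemma dominant_nf {u : Fin n} (hu : G.degree u = n - 1) :
    G.neighborFinset u = univ.erase u := by
  refine Finset.eq_of_subset_of_card_le
    (fun w hw => Finset.mem_erase.mpr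
      ⟨(G.adj_symm ((mem_neighborFinset _ _ _).mp hw)).ne, mem_univ w⟩) ?_
  rw [Finset.card_erase_of_mem (mem_univ u), Finset.card_univ, Fintype.card_fin,
    card_neighborFinset_eq_degree, hu]

lemma dominant_adj {u : Fin n} (hu : G.degree u = n - 1) {v : Fin n} (hv : v ≠ u) :
    G.Adj u v :=
  (mem_neighborFinset _ _ _).mp (by rw [dominant_nf hu]; exact Finset.mem_erase.mpr ⟨hv, mem_univ v⟩)

lemma dominant_deg_le_two (hG : ¬ Contains (cycleGraph 4) G) {u : Fin n}
    (hu : G.degree u = n - 1) {v : Fin n} (hv : v ≠ u) : G.degree v ≤ 2 := by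
  by_contra h
  push_neg at h
  have h2 : 2 ≤ ((G.neighborFinset v).erase u).card := by
    have := Finset.pred_card_le_card_erase (a := u) (s := G.neighborFinset v)
    rw [card_neighborFinset_eq_degree] at this
    omega
  obtain ⟨x, hx, y, hy, hxy⟩ := Finset.one_lt_card.mp (by omega : 1 < ((G.neighborFinset v).erase u).card)
  rw [Finset.mem_erase, mem_neighborFinset] at hx hy
  have hcontra : 1 < (G.neighborFinset x ∩ G.neighborFinset y).card := by
    refine Finset.one_lt_card.mpr ⟨u, ?_, v, ?_, ?_⟩
    · rw [Finset.mem_inter, mem_neighborFinset, mem_neighborFinset]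
      exact ⟨(dominant_adj hu hx.1).symm, (dominant_adj hu hy.1).symm⟩
    · rw [Finset.mem_inter, mem_neighborFinset, mem_neighborFinset]
      exact ⟨hx.2.symm, hy.2.symm⟩
    · exact fun hc => hv hc.symm
  exact absurd (cn_le_one hG hxy) (by omega)

lemma dominant_bound (hG : ¬ Contains (cycleGraph 4) G) {u : Fin n}
    (hu : G.degree u = n - 1) (r : ℕ) :
    ∑ v : Fin n, G.degree v ^ r ≤
      (n - 1) ^ r + 2 ^ r * (2 * ((n - 1) / 2)) + ((n - 1) - 2 * ((n - 1) / 2)) := by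
  classical
  set M : Finset (Fin n) := univ.filter (fun v => v ≠ u ∧ G.degree v = 2) with hM
  -- the pairing function
  set p : Fin n → Fin n := fun v =>
    if h : ∃ a, (G.neighborFinset v).erase u = {a} then h.choose else v with hp
  have hspec : ∀ v ∈ M, (G.neighborFinset v).erase u = {p v} := by
    intro v hv
    rw [hM, Finset.mem_filter] at hv
    have hcard : ((G.neighborFinset v).erase u).card = 1 := by
      have hmem : u ∈ G.neighborFinset v :=
        (mem_neighborFinset _ _ _).mpr (dominant_adj hu hv.2.1).symm
      rw [Finset.card_erase_of_mem hmem, card_neighborFinset_eq_degree, hv.2.2]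
    obtain hex := Finset.card_eq_one.mp hcard
    rw [hp]
    simp only [dif_pos hex]
    exact hex.choose_spec
  have hpv_mem : ∀ v ∈ M, p v ∈ (G.neighborFinset v).erase u := by
    intro v hv; rw [hspec v hv]; exact Finset.mem_singleton_self _
  have hpM : ∀ v ∈ M, p v ∈ M := by
    intro v hv
    have hm := hpv_mem v hv
    rw [Finset.mem_erase, mem_neighborFinset] at hm
    rw [hM, Finset.mem_filter] at hv ⊢
    refine ⟨mem_univ _, hm.1, le_antisymm (dominant_deg_le_two hG hu hm.1) ?_⟩
    rw [← card_neighborFinset_eq_degree]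
    refine Finset.one_lt_card.mpr ⟨u, ?_, v, ?_, fun hc => hv.2.1 hc.symm⟩
    · exact (mem_neighborFinset _ _ _).mpr (dominant_adj hu hm.1).symm
    · exact (mem_neighborFinset _ _ _).mpr hm.2.symm
  have hpne : ∀ v ∈ M, p v ≠ v := by
    intro v hv
    have hm := hpv_mem v hv
    rw [Finset.mem_erase, mem_neighborFinset] at hm
    intro hc
    have h2 := hm.2
    rw [hc] at h2
    exact G.loopless.irrefl v h2
  have hpp : ∀ v ∈ M, p (p v) = v := by
    intro v hv
    have h1 := hspec (p v) (hpM v hv)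
    have hm := hpv_mem v hv
    rw [Finset.mem_erase, mem_neighborFinset] at hm
    have hvM : v ∈ M := hv
    rw [hM, Finset.mem_filter] at hvM
    have : v ∈ (G.neighborFinset (p v)).erase u :=
      Finset.mem_erase.mpr ⟨hvM.2.1, (mem_neighborFinset _ _ _).mpr hm.2.symm⟩
    rw [h1, Finset.mem_singleton] at this
    exact this.symm
  have heven : Even M.card := even_card_of_inv p M hpM hpne hpp
  have hMle : M.card ≤ n - 1 := by
    calc M.card ≤ (univ.erase u).card := Finset.card_le_card (fun v hv => by
          rw [hM, Finset.mem_filter] at hv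
          exact Finset.mem_erase.mpr ⟨hv.2.1, mem_univ v⟩)
      _ = n - 1 := by
          rw [Finset.card_erase_of_mem (mem_univ u), Finset.card_univ, Fintype.card_fin]
  have hK : M.card ≤ 2 * ((n - 1) / 2) := by
    obtain ⟨c, hc⟩ := heven
    omega
  -- pointwise bound on erase u
  have hpoint : ∀ v ∈ univ.erase u, G.degree v ^ r ≤ (if G.degree v = 2 then 2 ^ r else 1) := by
    intro v hv
    have hvu := (Finset.mem_erase.mp hv).1
    by_cases h2 : G.degree v = 2
    · rw [if_pos h2, h2]
    · rw [if_neg h2]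
      have : G.degree v ≤ 1 := by
        have := dominant_deg_le_two hG hu hvu
        omega
      calc G.degree v ^ r ≤ 1 ^ r := Nat.pow_le_pow_left this r
        _ = 1 := one_pow r
  have hfilter : (univ.erase u).filter (fun v => G.degree v = 2) = M := by
    ext v
    rw [hM, Finset.mem_filter, Finset.mem_filter, Finset.mem_erase]
    constructor
    · exact fun h => ⟨mem_univ v, h.1.1, h.2⟩
    · exact fun h => ⟨⟨h.2.1, mem_univ v⟩, h.2.2⟩
  have hsum2 : ∑ v ∈ univ.erase u, G.degree v ^ r ≤ 2 ^ r * M.card + ((n - 1) - M.card) := by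
    calc ∑ v ∈ univ.erase u, G.degree v ^ r
        ≤ ∑ v ∈ univ.erase u, (if G.degree v = 2 then 2 ^ r else 1) :=
          Finset.sum_le_sum hpoint
      _ = 2 ^ r * M.card + ((n - 1) - M.card) := by
          rw [Finset.sum_ite, Finset.sum_const, Finset.sum_const, hfilter, smul_eq_mul,
            smul_eq_mul, mul_one, mul_comm]
          congr 1
          rw [Finset.filter_not, Finset.card_sdiff_of_subset (Finset.filter_subset _ _), hfilter,
            Finset.card_erase_of_mem (mem_univ u), Finset.card_univ, Fintype.card_fin]
  calc ∑ v : Fin n, G.degree v ^ r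
      = ∑ v ∈ univ.erase u, G.degree v ^ r + G.degree u ^ r :=
        (Finset.sum_erase_add _ _ (mem_univ u)).symm
    _ ≤ (2 ^ r * M.card + ((n - 1) - M.card)) + (n - 1) ^ r := by
        rw [hu]; exact Nat.add_le_add_right hsum2 _
    _ ≤ (2 ^ r * (2 * ((n - 1) / 2)) + ((n - 1) - 2 * ((n - 1) / 2))) + (n - 1) ^ r := by
        refine Nat.add_le_add_right ?_ _
        exact dominant_arith (2 ^ r) (n - 1) M.card (2 * ((n - 1) / 2))
          (Nat.one_le_two_pow) hK (by omega)
    _ = (n - 1) ^ r + 2 ^ r * (2 * ((n - 1) / 2)) + ((n - 1) - 2 * ((n - 1) / 2)) := by ring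

end

section
variable {n : ℕ} {G : SimpleGraph (Fin n)} [DecidableRel G.Adj]

lemma nondominant_bound (hG : ¬ Contains (cycleGraph 4) G) (hn : 80 ≤ n) (k : ℕ)
    (hd : ∀ v : Fin n, G.degree v ≤ n - 2) :
    ∑ v : Fin n, G.degree v ^ (k + 3) < (n - 1) ^ (k + 3) := by
  classical
  have hne : (univ : Finset (Fin n)).Nonempty := ⟨⟨0, by omega⟩, mem_univ _⟩
  obtain ⟨u, -, hu⟩ := Finset.exists_max_image (univ : Finset (Fin n)) (fun v => G.degree v) hne
  have humax : ∀ v : Fin n, G.degree v ≤ G.degree u := fun v => hu v (mem_univ v)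
  set D := G.degree u with hD
  have hsum_deg : ∑ v : Fin n, G.degree v ≤ n * D := by
    calc ∑ v : Fin n, G.degree v ≤ ∑ _v : Fin n, D := Finset.sum_le_sum fun v _ => humax v
      _ = n * D := by rw [Finset.sum_const, Finset.card_univ, Fintype.card_fin, smul_eq_mul]
  rcases le_or_gt (2 * D) (n - 1) with hcase | hcase
  · -- Case A : small max degree
    have hpoint : ∀ v : Fin n, G.degree v ^ (k + 3) ≤ D ^ (k + 1) * G.degree v ^ 2 := by
      intro v
      calc G.degree v ^ (k + 3) = G.degree v ^ (k + 1) * G.degree v ^ 2 := by ring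
        _ ≤ D ^ (k + 1) * G.degree v ^ 2 :=
            Nat.mul_le_mul_right _ (Nat.pow_le_pow_left (humax v) _)
    have hsq : ∑ v : Fin n, G.degree v ^ 2 ≤ n * (n - 1) + n * D := by
      calc ∑ v : Fin n, G.degree v ^ 2
          = ∑ v : Fin n, (G.degree v * (G.degree v - 1) + G.degree v) := by
            exact Finset.sum_congr rfl fun v _ => sq_split _
        _ = ∑ v : Fin n, G.degree v * (G.degree v - 1) + ∑ v : Fin n, G.degree v :=
            Finset.sum_add_distrib
        _ ≤ n * (n - 1) + n * D := Nat.add_le_add (sum_dd_le hG) hsum_deg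
    calc ∑ v : Fin n, G.degree v ^ (k + 3)
        ≤ ∑ v : Fin n, D ^ (k + 1) * G.degree v ^ 2 := Finset.sum_le_sum fun v _ => hpoint v
      _ = D ^ (k + 1) * ∑ v : Fin n, G.degree v ^ 2 := by rw [Finset.mul_sum]
      _ ≤ D ^ (k + 1) * (n * (n - 1) + n * D) := Nat.mul_le_mul_left _ hsq
      _ < (n - 1) ^ (k + 3) := caseA_arith k n D (by omega) hcase
  · -- Case B : large max degree
    set m := n - 1 with hm
    set t := m - D with ht
    have hDle : D ≤ n - 2 := hd u
    have ht1 : 1 ≤ t := by omega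
    have htD : t + 1 ≤ D := by omega
    have hDt : D + t = m := by omega
    have hsub : G.neighborFinset u ⊆ univ.erase u := fun w hw =>
      Finset.mem_erase.mpr ⟨(G.adj_symm ((mem_neighborFinset _ _ _).mp hw)).ne, mem_univ w⟩
    set O : Finset (Fin n) := (univ.erase u) \ G.neighborFinset u with hO
    have hOcard : O.card = t := by
      rw [hO, Finset.card_sdiff_of_subset hsub, Finset.card_erase_of_mem (mem_univ u),
        Finset.card_univ, Fintype.card_fin, card_neighborFinset_eq_degree]
    -- degree bound for neighbors of u
    have hb1 : ∀ w ∈ G.neighborFinset u, G.degree w ≤ t + 2 := by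
      intro w hw
      have hwu : w ≠ u := (G.adj_symm ((mem_neighborFinset _ _ _).mp hw)).ne
      have hsubn : G.neighborFinset w ⊆
          insert u ((G.neighborFinset w ∩ G.neighborFinset u) ∪ O) := by
        intro x hx
        rcases eq_or_ne x u with rfl | hxu
        · exact Finset.mem_insert_self _ _
        · refine Finset.mem_insert_of_mem ?_
          by_cases hxn : x ∈ G.neighborFinset u
          · exact Finset.mem_union_left _ (Finset.mem_inter.mpr ⟨hx, hxn⟩)
          · exact Finset.mem_union_right _ (Finset.mem_sdiff.mpr
              ⟨Finset.mem_erase.mpr ⟨hxu, mem_univ x⟩, hxn⟩)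
      calc G.degree w = (G.neighborFinset w).card := (card_neighborFinset_eq_degree _ _).symm
        _ ≤ (insert u ((G.neighborFinset w ∩ G.neighborFinset u) ∪ O)).card :=
            Finset.card_le_card hsubn
        _ ≤ ((G.neighborFinset w ∩ G.neighborFinset u) ∪ O).card + 1 :=
            Finset.card_insert_le _ _
        _ ≤ ((G.neighborFinset w ∩ G.neighborFinset u).card + O.card) + 1 :=
            Nat.add_le_add_right (Finset.card_union_le _ _) 1
        _ ≤ (1 + t) + 1 := by
            refine Nat.add_le_add_right (Nat.add_le_add ?_ hOcard.le) 1
            exact cn_le_one hG hwu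
        _ = t + 2 := by ring
    -- degree bound for outside vertices
    have hb2 : ∀ x ∈ O, G.degree x ≤ t := by
      intro x hx
      rw [hO, Finset.mem_sdiff, Finset.mem_erase] at hx
      have hsubn : G.neighborFinset x ⊆
          (G.neighborFinset x ∩ G.neighborFinset u) ∪ (O.erase x) := by
        intro y hy
        have hyx : y ≠ x := (G.adj_symm ((mem_neighborFinset _ _ _).mp hy)).ne
        have hyu : y ≠ u := by
          rintro rfl
          exact hx.2 ((mem_neighborFinset _ _ _).mpr
            (G.adj_symm ((mem_neighborFinset _ _ _).mp hy)))
        by_cases hyn : y ∈ G.neighborFinset u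
        · exact Finset.mem_union_left _ (Finset.mem_inter.mpr ⟨hy, hyn⟩)
        · exact Finset.mem_union_right _ (Finset.mem_erase.mpr ⟨hyx,
            Finset.mem_sdiff.mpr ⟨Finset.mem_erase.mpr ⟨hyu, mem_univ y⟩, hyn⟩⟩)
      have hxO : x ∈ O := by
        rw [hO, Finset.mem_sdiff, Finset.mem_erase]
        exact ⟨⟨hx.1.1, mem_univ x⟩, hx.2⟩
      calc G.degree x = (G.neighborFinset x).card := (card_neighborFinset_eq_degree _ _).symm
        _ ≤ ((G.neighborFinset x ∩ G.neighborFinset u) ∪ (O.erase x)).card :=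
            Finset.card_le_card hsubn
        _ ≤ (G.neighborFinset x ∩ G.neighborFinset u).card + (O.erase x).card :=
            Finset.card_union_le _ _
        _ ≤ 1 + (t - 1) := by
            refine Nat.add_le_add (cn_le_one hG hx.1.1) ?_
            rw [Finset.card_erase_of_mem hxO, hOcard]
        _ = t := by omega
    -- partition of erase u
    have hpart : univ.erase u = G.neighborFinset u ∪ O := by
      rw [hO, Finset.union_sdiff_of_subset hsub]
    have hdisj : Disjoint (G.neighborFinset u) O := Finset.disjoint_sdiff
    -- sum of degrees over erase u
    have hBsum : ∑ v ∈ univ.erase u, G.degree v ≤ (D + m) + t * t := by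
      rw [hpart, Finset.sum_union hdisj]
      refine Nat.add_le_add (sum_deg_nbhd hG u) ?_
      calc ∑ x ∈ O, G.degree x ≤ ∑ _x ∈ O, t := Finset.sum_le_sum hb2
        _ = t * t := by rw [Finset.sum_const, hOcard, smul_eq_mul]
    -- sum of d(d-1) over erase u
    have hAsum : ∑ v ∈ univ.erase u, G.degree v * (G.degree v - 1) + D * (D - 1) ≤ n * m := by
      have := sum_dd_le hG
      rw [← Finset.sum_erase_add _ _ (mem_univ u)] at this
      exact this
    -- the quadratic sum bound
    have hS : ∑ v ∈ univ.erase u, G.degree v ^ 2 ≤ 2 * m * (t + 2) := by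
      have hsq : ∑ v ∈ univ.erase u, G.degree v ^ 2 =
          ∑ v ∈ univ.erase u, G.degree v * (G.degree v - 1) + ∑ v ∈ univ.erase u, G.degree v := by
        rw [← Finset.sum_add_distrib]
        exact Finset.sum_congr rfl fun v _ => sq_split _
      obtain ⟨d, hd'⟩ : ∃ d, D = d + 1 := ⟨D - 1, by omega⟩
      have hA := hAsum
      have hB := hBsum
      rw [hsq]
      rw [hd'] at hA hB
      simp only [Nat.add_sub_cancel] at hA
      have hn' : n = m + 1 := by omega
      have hnm : n * m = (m + 1) * m := by rw [hn']
      have hA2 := hA.trans_eq hnm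
      have hDt' : (d + 1) + t = m := by omega
      nlinarith [hA2, hB, hDt']
    -- pointwise degree bound on erase u
    have hpoint : ∀ v ∈ univ.erase u, G.degree v ^ (k + 3) ≤ (t + 2) ^ (k + 1) * G.degree v ^ 2 := by
      intro v hv
      have hvle : G.degree v ≤ t + 2 := by
        rw [hpart] at hv
        rcases Finset.mem_union.mp hv with h | h
        · exact hb1 v h
        · exact (hb2 v h).trans (by omega)
      calc G.degree v ^ (k + 3) = G.degree v ^ (k + 1) * G.degree v ^ 2 := by ring
        _ ≤ (t + 2) ^ (k + 1) * G.degree v ^ 2 :=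
            Nat.mul_le_mul_right _ (Nat.pow_le_pow_left hvle _)
    calc ∑ v : Fin n, G.degree v ^ (k + 3)
        = ∑ v ∈ univ.erase u, G.degree v ^ (k + 3) + D ^ (k + 3) :=
          (Finset.sum_erase_add _ _ (mem_univ u)).symm
      _ ≤ (t + 2) ^ (k + 1) * ∑ v ∈ univ.erase u, G.degree v ^ 2 + D ^ (k + 3) := by
          refine Nat.add_le_add_right ?_ _
          rw [Finset.mul_sum]
          exact Finset.sum_le_sum hpoint
      _ ≤ (t + 2) ^ (k + 1) * (2 * m * (t + 2)) + D ^ (k + 3) :=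
          Nat.add_le_add_right (Nat.mul_le_mul_left _ hS) _
      _ = D ^ (k + 3) + (t + 2) ^ (k + 1) * (2 * m * (t + 2)) := by ring
      _ < m ^ (k + 3) := caseB_arith k D t m hDt htD ht1 (by omega)

end

end Aux

/-- For `r ≥ 3` and all sufficiently large `n`,
`ex_r(n, C_4) = e_r(F_n)`. -/
theorem stmt_7 (r : ℕ) (hr : 3 ≤ r) :
    ∃ n₀ : ℕ, ∀ n ≥ n₀,
      exDegPow n r (SimpleGraph.cycleGraph 4) = degPow (friendshipGraph n) r := by
  obtain ⟨k, rfl⟩ : ∃ k, r = k + 3 := ⟨r - 3, by omega⟩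
  refine ⟨80, fun n hn => ?_⟩
  have hgreat : IsGreatest
      {m | ∃ G : SimpleGraph (Fin n), ¬ Contains (SimpleGraph.cycleGraph 4) G ∧
        degPow G (k + 3) = m} (degPow (friendshipGraph n) (k + 3)) := by
    constructor
    · exact ⟨friendshipGraph n, friend_c4_free n, rfl⟩
    · rintro x ⟨G, hG, rfl⟩
      classical
      rw [degPow_eq_sum, friend_degPow (by omega)]
      by_cases hdom : ∃ u : Fin n, G.degree u = n - 1
      · obtain ⟨u, hu⟩ := hdom
        exact dominant_bound hG hu (k + 3)
      · push_neg at hdom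
        have hd : ∀ v : Fin n, G.degree v ≤ n - 2 := by
          intro v
          have h1 := degree_le_pred (G := G) v
          have h2 := hdom v
          omega
        have hlt := nondominant_bound hG (by omega) k hd
        have hle : (n - 1) ^ (k + 3) ≤ (n - 1) ^ (k + 3) +
            2 ^ (k + 3) * (2 * ((n - 1) / 2)) + ((n - 1) - 2 * ((n - 1) / 2)) :=
          (Nat.le_add_right _ _).trans (Nat.le_add_right _ _)
        exact le_of_lt (lt_of_lt_of_le hlt hle)
  exact hgreat.csSup_eq
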